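/- arXiv:2202.10766 — 2 statements merged into one kernel-verified Lean document; each statement's English description precedes it below -/
import Mathlib

section
/- For every Datalog program Σ and annotated database (D,K,λ) with K a commutative ω-continuous semiring, the K-annotated interpretation (I₀,μ₀) defined by I₀ = { α : Σ,D ⊨ α } and μ₀(α) = AT(Σ,D,K,λ,α) for every α ∈ I₀ is a K-annotated model of Σ and (D,K,λ). -/
attribute [local instance] Classical.propDecidable

namespace Datalog

/-- Terms are built from constants and variables. -/
inductive Term (C V : Type) : Type
  | const : C → Term C V
  | var : V → Term C V

/-- An atom over predicates `P` with arguments of type `τ`. -/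
structure Atom (P τ : Type) : Type where
  pred : P
  args : List τ

/-- A fact (ground atom) has constants as arguments. -/
abbrev Fact (P C : Type) := Atom P C

/-- Substitution of a variable assignment in a term. -/
def Term.subst {C : Type} {n : ℕ} (σ : Fin n → C) : Term C (Fin n) → C
  | Term.const c => c
  | Term.var v => σ v

/-- Substitution of a variable assignment in an atom, producing a fact. -/
def Atom.subst {P C : Type} {n : ℕ} (σ : Fin n → C) (a : Atom P (Term C (Fin n))) : Fact P C :=
  ⟨a.pred, a.args.map (Term.subst σ)⟩

/-- Renaming of predicates in an atom. -/
def Atom.mapPred {P Q τ : Type} (f : P → Q) (a : Atom P τ) : Atom Q τ := ⟨f a.pred, a.args⟩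

/-- Turn a fact into a (ground) rule atom. -/
def Atom.toRuleAtom {P C : Type} (n : ℕ) (a : Fact P C) : Atom P (Term C (Fin n)) :=
  ⟨a.pred, a.args.map Term.const⟩

/-- A (normalized) Datalog rule `φ(x⃗,y⃗) → H(x⃗)`: the body is a conjunction of atoms over
variables `x⃗ ∪ y⃗` (every variable of the rule occurs in the body), the head a single atom. -/
structure Rule (P C : Type) : Type where
  nvars : ℕ
  nbody : ℕ
  body : Fin nbody → Atom P (Term C (Fin nvars))
  head : Atom P (Term C (Fin nvars))
  vars_in_body : ∀ v : Fin nvars, ∃ i : Fin nbody, Term.var v ∈ (body i).args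

variable {P C K : Type}

/-- A set of facts is closed under the rules of a program. -/
def ClosedUnder (prog : Set (Rule P C)) (I : Set (Fact P C)) : Prop :=
  ∀ r ∈ prog, ∀ σ : Fin r.nvars → C,
    (∀ i, (r.body i).subst σ ∈ I) → r.head.subst σ ∈ I

/-- `Σ, D ⊨ α` : the fact `α` belongs to every set of facts containing `D`
and closed under the rules of `Σ`. -/
def Entails (prog : Set (Rule P C)) (D : Set (Fact P C)) (a : Fact P C) : Prop :=
  ∀ I : Set (Fact P C), D ⊆ I → ClosedUnder prog I → a ∈ I

/-- Derivation trees of a fact w.r.t. a program and a database: leaves are labeled by facts of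
`D`; an inner node is labeled by a rule `r ∈ Σ` together with a homomorphism `σ`, its children
corresponding bijectively to the body atoms of `r`, and derives the fact `σ(head r)`. -/
inductive DTree {P C : Type} (prog : Set (Rule P C)) (D : Set (Fact P C)) : Fact P C → Type
  | leaf (a : Fact P C) (ha : a ∈ D) : DTree prog D a
  | node (r : Rule P C) (hr : r ∈ prog) (σ : Fin r.nvars → C)
      (children : ∀ i : Fin r.nbody, DTree prog D ((r.body i).subst σ)) :
      DTree prog D (r.head.subst σ)

namespace DTree

variable {prog : Set (Rule P C)} {D : Set (Fact P C)}

/-- `Λ(t)`: the product of the annotations of the leaves of `t`. -/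
def weight [CommSemiring K] (lam : Fact P C → K) : ∀ {a : Fact P C}, DTree prog D a → K
  | _, .leaf a _ => lam a
  | _, .node r _ _ ch => ∏ i : Fin r.nbody, weight lam (ch i)

/-- The depth of a derivation tree. -/
def depth : ∀ {a : Fact P C}, DTree prog D a → ℕ
  | _, .leaf _ _ => 0
  | _, .node r _ _ ch => (Finset.univ.sup fun i : Fin r.nbody => depth (ch i)) + 1

/-- A derivation tree of `a` is of minimal depth if no derivation tree of `a` is of
smaller depth. -/
def minimalDepth {a : Fact P C} (t : DTree prog D a) : Prop :=
  ∀ t' : DTree prog D a, t.depth ≤ t'.depth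

/-- A derivation tree is hereditary minimal-depth if every subtree rooted at an inner node
is a minimal-depth derivation tree of the fact it derives. -/
def hereditaryMinimal : ∀ {a : Fact P C}, DTree prog D a → Prop
  | _, .leaf _ _ => True
  | _, .node r hr σ ch =>
      minimalDepth (.node r hr σ ch) ∧ ∀ i, hereditaryMinimal (ch i)

/-- `t.avoid s` : no fact labeling a node of `t` belongs to `s`, nor is repeated along a
root-to-leaf path. -/
def avoid : Set (Fact P C) → ∀ {a : Fact P C}, DTree prog D a → Prop
  | s, _, .leaf a _ => a ∉ s
  | s, _, .node r _ σ ch =>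
      r.head.subst σ ∉ s ∧ ∀ i, avoid (insert (r.head.subst σ) s) (ch i)

/-- A derivation tree is non-recursive if it does not contain two nodes labeled with the same
fact such that one is a descendant of the other. -/
def nonRecursive {a : Fact P C} (t : DTree prog D a) : Prop := t.avoid ∅

/-- `t.hasLeaf x` : `x` labels some leaf of `t`. -/
def hasLeaf (x : Fact P C) : ∀ {a : Fact P C}, DTree prog D a → Prop
  | _, .leaf a _ => a = x
  | _, .node _ _ _ ch => ∃ i, hasLeaf x (ch i)

end DTree

/-- The finite partial sums of `f` over the set `S`. -/
def partialSums {T : Type} [AddCommMonoid K] (S : Set T) (f : T → K) : Set K :=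
  { x | ∃ F : Finset T, ↑F ⊆ S ∧ x = ∑ t ∈ F, f t }

/-- The (possibly infinite) sum of `f` over `S`, i.e. the least upper bound of the finite
partial sums (junk value `0` if no least upper bound exists). -/
noncomputable def setSum {T : Type} [AddCommMonoid K] [PartialOrder K]
    (S : Set T) (f : T → K) : K :=
  if h : ∃ s, IsLUB (partialSums S f) s then h.choose else 0

/-- The greatest lower bound of a set of semiring elements (junk value `0` if none exists). -/
noncomputable def setInf [Zero K] [PartialOrder K] (S : Set K) : K :=
  if h : ∃ z, IsGLB S z then h.choose else 0

/-- A commutative ω-continuous semiring: the natural order `a ≤ b ↔ ∃ c, a + c = b` is a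
partial order, every ω-chain has a least upper bound, and `+` and `×` preserve these
least upper bounds. -/
class OmegaCommSemiring (K : Type) extends CommSemiring K, PartialOrder K where
  le_iff_exists_add : ∀ a b : K, a ≤ b ↔ ∃ c, a + c = b
  chain_lub : ∀ f : ℕ → K, Monotone f → ∃ s, IsLUB (Set.range f) s
  add_lub : ∀ (f : ℕ → K) (a s : K), Monotone f → IsLUB (Set.range f) s →
    IsLUB (Set.range fun n => a + f n) (a + s)
  mul_lub : ∀ (f : ℕ → K) (a s : K), Monotone f → IsLUB (Set.range f) s →
    IsLUB (Set.range fun n => a * f n) (a * s)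

/-- A positive semiring: a product is zero iff one factor is, a sum is zero iff both
summands are. -/
def PositiveSemiring (K : Type) [CommSemiring K] : Prop :=
  (∀ a b : K, a * b = 0 ↔ a = 0 ∨ b = 0) ∧ (∀ a b : K, a + b = 0 ↔ a = 0 ∧ b = 0)

/-- An annotated database: a set of facts together with an annotation function assigning a
semiring element to every fact (`0` outside the database). -/
structure AnnDB (P C K : Type) [Zero K] : Type where
  facts : Set (Fact P C)
  ann : Fact P C → K
  ann_eq_zero : ∀ a ∉ facts, ann a = 0

/-- Union of two annotated databases: annotations are added pointwise. -/
noncomputable def AnnDB.union [AddCommMonoid K] (d₁ d₂ : AnnDB P C K) : AnnDB P C K where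
  facts := d₁.facts ∪ d₂.facts
  ann a := d₁.ann a + d₂.ann a
  ann_eq_zero a ha := by
    show d₁.ann a + d₂.ann a = 0
    rw [d₁.ann_eq_zero a fun h => ha (Set.mem_union_left _ h),
      d₂.ann_eq_zero a fun h => ha (Set.mem_union_right _ h), add_zero]

/-- The facts derivable from `I` by one application of a rule of `prog`. -/
def derivable (prog : Set (Rule P C)) (I : Set (Fact P C)) : Set (Fact P C) :=
  { a | ∃ r ∈ prog, ∃ σ : Fin r.nvars → C,
      (∀ i, (r.body i).subst σ ∈ I) ∧ r.head.subst σ = a }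

/-- The relational provenance of the immediate consequences: the sum over all rules and
homomorphisms deriving `a` of the product of the annotations of the body facts. -/
noncomputable def ruleSum [CommSemiring K] (prog : Set (Rule P C)) (I : Set (Fact P C))
    (lam : Fact P C → K) (a : Fact P C) : K :=
  ∑ᶠ (p : (r : Rule P C) × (Fin r.nvars → C))
      (_ : p.1 ∈ prog ∧ (∀ i, (p.1.body i).subst p.2 ∈ I) ∧ p.1.head.subst p.2 = a),
    ∏ i : Fin p.1.nbody, lam ((p.1.body i).subst p.2)

/-- The annotation-aware immediate consequence operator `T_Σ`. -/
noncomputable def Tcons [CommSemiring K] (prog : Set (Rule P C)) (db : AnnDB P C K) :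
    AnnDB P C K where
  facts := derivable prog db.facts
  ann a := if a ∈ derivable prog db.facts then ruleSum prog db.facts db.ann a else 0
  ann_eq_zero a ha := if_neg ha

/-- The operator `Δ_Σ`: `T_Σ` restricted to the newly derived facts. -/
noncomputable def Dcons [CommSemiring K] (prog : Set (Rule P C)) (db : AnnDB P C K) :
    AnnDB P C K where
  facts := (Tcons prog db).facts \ db.facts
  ann a := if a ∈ (Tcons prog db).facts \ db.facts then (Tcons prog db).ann a else 0
  ann_eq_zero a ha := if_neg ha

/-- The naive evaluation sequence `I_n^0 := (D,K,λ)`, `I_n^{i+1} := T_Σ(I_n^i) ∪ (D,K,λ)`. -/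
noncomputable def naiveSeq [CommSemiring K] (prog : Set (Rule P C)) (db : AnnDB P C K) :
    ℕ → AnnDB P C K
  | 0 => db
  | i + 1 => (Tcons prog (naiveSeq prog db i)).union db

/-- The naive execution provenance semantics: the least upper bound of the annotations of `a`
along the naive evaluation sequence (and `0` if `a` is never derived). -/
noncomputable def NE [CommSemiring K] [PartialOrder K] (prog : Set (Rule P C))
    (db : AnnDB P C K) (a : Fact P C) : K :=
  if ∃ i, a ∈ (naiveSeq prog db i).facts then
    (if h : ∃ s, IsLUB (Set.range fun i => (naiveSeq prog db i).ann a) s then h.choose else 0)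
  else 0

/-- The optimized naive evaluation sequence, which stops as soon as the target fact is
derived. -/
noncomputable def optSeq [CommSemiring K] (prog : Set (Rule P C)) (db : AnnDB P C K)
    (target : Fact P C) : ℕ → AnnDB P C K
  | 0 => db
  | i + 1 =>
      if target ∈ (optSeq prog db target i).facts then optSeq prog db target i
      else (Tcons prog (optSeq prog db target i)).union db

/-- The optimized execution provenance semantics: the annotation of the target fact at the
stabilization point of the optimized naive evaluation sequence. -/
noncomputable def OE [CommSemiring K] (prog : Set (Rule P C)) (db : AnnDB P C K)
    (target : Fact P C) : K :=
  if h : ∃ k, ∀ ℓ, k ≤ ℓ → optSeq prog db target ℓ = optSeq prog db target k then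
    (optSeq prog db target h.choose).ann target
  else 0

/-- The seminaive evaluation sequence `I_sn^0 := (D,K,λ)`, `I_sn^{i+1} := I_sn^i ∪ Δ_Σ(I_sn^i)`. -/
noncomputable def semiSeq [CommSemiring K] (prog : Set (Rule P C)) (db : AnnDB P C K) :
    ℕ → AnnDB P C K
  | 0 => db
  | i + 1 => (semiSeq prog db i).union (Dcons prog (semiSeq prog db i))

/-- The seminaive execution provenance semantics: the annotation of the fact at the
stabilization point of the seminaive evaluation sequence. -/
noncomputable def SNE [CommSemiring K] (prog : Set (Rule P C)) (db : AnnDB P C K)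
    (a : Fact P C) : K :=
  if h : ∃ k, ∀ ℓ, k ≤ ℓ → semiSeq prog db ℓ = semiSeq prog db k then
    (semiSeq prog db h.choose).ann a
  else 0

/-- The all-tree provenance semantics `AT`: the (possibly infinite) sum, over all derivation
trees of `a`, of the product of the annotations of the leaves. -/
noncomputable def AT [CommSemiring K] [PartialOrder K] (prog : Set (Rule P C))
    (db : AnnDB P C K) (a : Fact P C) : K :=
  setSum (Set.univ : Set (DTree prog db.facts a)) fun t => t.weight db.ann

/-- The non-recursive tree provenance semantics `NRT`. -/
noncomputable def NRT [CommSemiring K] (prog : Set (Rule P C)) (db : AnnDB P C K)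
    (a : Fact P C) : K :=
  ∑ᶠ (t : DTree prog db.facts a) (_ : t.nonRecursive), t.weight db.ann

/-- The minimal depth tree provenance semantics `MDT`. -/
noncomputable def MDT [CommSemiring K] (prog : Set (Rule P C)) (db : AnnDB P C K)
    (a : Fact P C) : K :=
  ∑ᶠ (t : DTree prog db.facts a) (_ : t.minimalDepth), t.weight db.ann

/-- The hereditary minimal depth tree provenance semantics `HMDT`. -/
noncomputable def HMDT [CommSemiring K] (prog : Set (Rule P C)) (db : AnnDB P C K)
    (a : Fact P C) : K :=
  ∑ᶠ (t : DTree prog db.facts a) (_ : t.hereditaryMinimal), t.weight db.ann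

/-- `σ'` agrees with `σ` on the head variables of `r` (i.e. `h'(x⃗) = h(x⃗)`). -/
def headAgree (r : Rule P C) (σ σ' : Fin r.nvars → C) : Prop :=
  ∀ v : Fin r.nvars, Term.var v ∈ r.head.args → σ' v = σ v

/-- A `K`-annotated interpretation `(I,μ)` is a model of `Σ` and `(D,K,λ)`. -/
def IsAnnModel [CommSemiring K] [PartialOrder K] (prog : Set (Rule P C)) (db : AnnDB P C K)
    (I : Set (Fact P C)) (μ : Fact P C → K) : Prop :=
  db.facts ⊆ I ∧ (∀ a ∈ db.facts, db.ann a ≤ μ a) ∧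
  ∀ r ∈ prog, ∀ σ : Fin r.nvars → C, (∀ i, (r.body i).subst σ ∈ I) →
    r.head.subst σ ∈ I ∧
    setSum {σ' : Fin r.nvars → C | (∀ i, (r.body i).subst σ' ∈ I) ∧ headAgree r σ σ'}
        (fun σ' => ∏ i : Fin r.nbody, μ ((r.body i).subst σ'))
      ≤ μ (r.head.subst σ)

/-- The annotated model-based provenance semantics `AM`: the greatest lower bound, over all
annotated models, of the annotation of `a` (and `0` if `a` is not entailed). -/
noncomputable def AM [CommSemiring K] [PartialOrder K] (prog : Set (Rule P C))
    (db : AnnDB P C K) (a : Fact P C) : K :=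
  if Entails prog db.facts a then
    setInf { x | ∃ I μ, IsAnnModel prog db I μ ∧ μ a = x }
  else 0

/-- A `K`-set-annotated interpretation `(I,μ)` is a model of `Σ` and `(D,K,λ)`. -/
def IsSetAnnModel [CommSemiring K] (prog : Set (Rule P C)) (db : AnnDB P C K)
    (I : Set (Fact P C)) (μ : Fact P C → Set K) : Prop :=
  db.facts ⊆ I ∧ (∀ a ∈ db.facts, db.ann a ∈ μ a) ∧
  ∀ r ∈ prog, ∀ σ : Fin r.nvars → C, (∀ i, (r.body i).subst σ ∈ I) →
    r.head.subst σ ∈ I ∧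
    ∀ g : Fin r.nbody → K, (∀ i, g i ∈ μ ((r.body i).subst σ)) →
      (∏ i, g i) ∈ μ (r.head.subst σ)

/-- The set-annotated model-based provenance semantics `SAM`: the sum of the elements of the
intersection, over all set-annotated models, of the annotation set of `a`. -/
noncomputable def SAM [CommSemiring K] [PartialOrder K] (prog : Set (Rule P C))
    (db : AnnDB P C K) (a : Fact P C) : K :=
  setSum { k : K | ∀ I μ, IsSetAnnModel prog db I μ → k ∈ μ a } id

/-- The schema of a program: the predicates occurring in its rules. -/
def progSchema (prog : Set (Rule P C)) : Set P :=
  { p | ∃ r ∈ prog, r.head.pred = p ∨ ∃ i, (r.body i).pred = p }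

/-- The schema of a database: the predicates occurring in its facts. -/
def dbSchema (D : Set (Fact P C)) : Set P := { p | ∃ a ∈ D, a.pred = p }

/-- The domain of a database: the constants occurring in its facts. -/
def dbConsts (D : Set (Fact P C)) : Set C := { c | ∃ a ∈ D, c ∈ a.args }

/-- A ground rule built from a list of facts (the body) and a fact (the head). -/
def factRule (body : List (Fact P C)) (head : Fact P C) : Rule P C where
  nvars := 0
  nbody := body.length
  body := fun i => (body.get i).toRuleAtom 0
  head := head.toRuleAtom 0
  vars_in_body := fun v => v.elim0

/-- A ground instance of a rule. -/
def Rule.ground (r : Rule P C) (σ : Fin r.nvars → C) : Rule P C where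
  nvars := 0
  nbody := r.nbody
  body := fun i => ((r.body i).subst σ).toRuleAtom 0
  head := (r.head.subst σ).toRuleAtom 0
  vars_in_body := fun v => v.elim0

/-- The grounding `Σ_D` of a program w.r.t. the domain of a database. -/
def grounding (prog : Set (Rule P C)) (D : Set (Fact P C)) : Set (Rule P C) :=
  { r' | ∃ r ∈ prog, ∃ σ : Fin r.nvars → C, (∀ v, σ v ∈ dbConsts D) ∧ r' = r.ground σ }

/-- Renaming of predicates in a rule. -/
def Rule.mapPred {Q : Type} (f : P → Q) (r : Rule P C) : Rule Q C where
  nvars := r.nvars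
  nbody := r.nbody
  body := fun i => (r.body i).mapPred f
  head := r.head.mapPred f
  vars_in_body := fun v => r.vars_in_body v

/-- An adornment of a rule: exactly one body atom is adorned (sent to the `Sum.inr` copy of
the predicates), the head is adorned or not, all the other atoms keep their predicates
(`Sum.inl` copy). -/
def adornRule (r : Rule P C) (i : Fin r.nbody) (adornHead : Bool) : Rule (P ⊕ P) C where
  nvars := r.nvars
  nbody := r.nbody
  body := fun j => if j = i then (r.body j).mapPred Sum.inr else (r.body j).mapPred Sum.inl
  head := if adornHead then r.head.mapPred Sum.inr else r.head.mapPred Sum.inl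
  vars_in_body := by
    intro v
    obtain ⟨j, hj⟩ := r.vars_in_body v
    refine ⟨j, ?_⟩
    split <;> exact hj

/-- The set of adornments of a rule. -/
def adornedRules (r : Rule P C) : Set (Rule (P ⊕ P) C) :=
  { r' | ∃ (i : Fin r.nbody) (b : Bool), r' = adornRule r i b }

/-! ### Auxiliary development for Statement 14 -/

section Aux

variable {P C K : Type} [OmegaCommSemiring K]

lemma omega_le_iff {a b : K} : a ≤ b ↔ ∃ c, a + c = b :=
  OmegaCommSemiring.le_iff_exists_add a b

lemma omega_self_le_add (a c : K) : a ≤ a + c := omega_le_iff.2 ⟨c, rfl⟩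

lemma omega_zero_le (a : K) : (0 : K) ≤ a := omega_le_iff.2 ⟨a, zero_add a⟩

lemma omega_add_le_add_left {a b : K} (h : a ≤ b) (c : K) : c + a ≤ c + b := by
  obtain ⟨d, rfl⟩ := omega_le_iff.1 h
  exact omega_le_iff.2 ⟨d, by ring⟩

lemma omega_mul_le_mul_left {a b : K} (h : a ≤ b) (c : K) : c * a ≤ c * b := by
  obtain ⟨d, rfl⟩ := omega_le_iff.1 h
  exact omega_le_iff.2 ⟨c * d, by ring⟩

instance (priority := 100) OmegaCommSemiring.toOrderedAddCommMonoid :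
    IsOrderedAddMonoid K :=
  { add_le_add_left := fun a b h c => by
      rw [add_comm a c, add_comm b c]; exact omega_add_le_add_left h c }

instance (priority := 100) OmegaCommSemiring.toOrderedCommMonoid :
    IsOrderedMonoid K :=
  { mul_le_mul_left := fun a b h c => by
      rw [mul_comm a c, mul_comm b c]; exact omega_mul_le_mul_left h c }

lemma omega_isLUB_const (a : K) : IsLUB (Set.range fun _ : ℕ => a) a := by
  constructor
  · rintro x ⟨n, rfl⟩; exact le_refl a
  · intro x hx; exact hx ⟨0, rfl⟩

lemma chain_mul_lub {f g : ℕ → K} {s t : K} (hf : Monotone f) (hg : Monotone g)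
    (hs : IsLUB (Set.range f) s) (ht : IsLUB (Set.range g) t) :
    IsLUB (Set.range fun n => f n * g n) (s * t) := by
  constructor
  · rintro x ⟨n, rfl⟩
    exact mul_le_mul' (hs.1 ⟨n, rfl⟩) (ht.1 ⟨n, rfl⟩)
  · intro u hu
    have h1 : ∀ n, f n * t ≤ u := by
      intro n
      refine (OmegaCommSemiring.mul_lub g (f n) t hg ht).2 ?_
      rintro x ⟨m, rfl⟩
      calc f n * g m ≤ f (max n m) * g (max n m) :=
            mul_le_mul' (hf (le_max_left n m)) (hg (le_max_right n m))
        _ ≤ u := hu ⟨max n m, rfl⟩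
    have h2 : t * s ≤ u := by
      refine (OmegaCommSemiring.mul_lub f t s hf hs).2 ?_
      rintro x ⟨n, rfl⟩
      show t * f n ≤ u
      rw [mul_comm]
      exact h1 n
    rwa [mul_comm t s] at h2

lemma chain_add_lub {f g : ℕ → K} {s t : K} (hf : Monotone f) (hg : Monotone g)
    (hs : IsLUB (Set.range f) s) (ht : IsLUB (Set.range g) t) :
    IsLUB (Set.range fun n => f n + g n) (s + t) := by
  constructor
  · rintro x ⟨n, rfl⟩
    exact add_le_add (hs.1 ⟨n, rfl⟩) (ht.1 ⟨n, rfl⟩)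
  · intro u hu
    have h1 : ∀ n, f n + t ≤ u := by
      intro n
      refine (OmegaCommSemiring.add_lub g (f n) t hg ht).2 ?_
      rintro x ⟨m, rfl⟩
      calc f n + g m ≤ f (max n m) + g (max n m) :=
            add_le_add (hf (le_max_left n m)) (hg (le_max_right n m))
        _ ≤ u := hu ⟨max n m, rfl⟩
    have h2 : t + s ≤ u := by
      refine (OmegaCommSemiring.add_lub f t s hf hs).2 ?_
      rintro x ⟨n, rfl⟩
      show t + f n ≤ u
      rw [add_comm]
      exact h1 n
    rwa [add_comm t s] at h2

lemma mono_finset_prod {ι : Type} (F : Finset ι) (f : ι → ℕ → K)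
    (hf : ∀ i, Monotone (f i)) : Monotone fun n => ∏ i ∈ F, f i n :=
  fun _ _ h => Finset.prod_le_prod' fun i _ => hf i h

lemma mono_finset_sum {ι : Type} (F : Finset ι) (f : ι → ℕ → K)
    (hf : ∀ i, Monotone (f i)) : Monotone fun n => ∑ i ∈ F, f i n :=
  fun _ _ h => Finset.sum_le_sum fun i _ => hf i h

lemma chain_prod_lub {ι : Type} (F : Finset ι) (f : ι → ℕ → K) (s : ι → K)
    (hf : ∀ i, Monotone (f i)) (hs : ∀ i, IsLUB (Set.range (f i)) (s i)) :
    IsLUB (Set.range fun n => ∏ i ∈ F, f i n) (∏ i ∈ F, s i) := by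
  classical
  induction F using Finset.induction_on with
  | empty => simpa using omega_isLUB_const (1 : K)
  | @insert a F ha ih =>
      simp only [Finset.prod_insert ha]
      exact chain_mul_lub (hf a) (mono_finset_prod F f hf) (hs a) ih

lemma chain_sum_lub {ι : Type} (F : Finset ι) (f : ι → ℕ → K) (s : ι → K)
    (hf : ∀ i, Monotone (f i)) (hs : ∀ i, IsLUB (Set.range (f i)) (s i)) :
    IsLUB (Set.range fun n => ∑ i ∈ F, f i n) (∑ i ∈ F, s i) := by
  classical
  induction F using Finset.induction_on with
  | empty => simpa using omega_isLUB_const (0 : K)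
  | @insert a F ha ih =>
      simp only [Finset.sum_insert ha]
      exact chain_add_lub (hf a) (mono_finset_sum F f hf) (hs a) ih

lemma exists_partialSums_chain {T : Type} [Countable T] (S : Set T) (f : T → K) :
    ∃ c : ℕ → K, Monotone c ∧
      (∀ n, c n ∈ partialSums S f) ∧
      IsLUB (Set.range c) (setSum S f) ∧
      IsLUB (partialSums S f) (setSum S f) := by
  classical
  obtain ⟨e, he⟩ := exists_injective_nat T
  have hfinn : ∀ n : ℕ, {t : T | t ∈ S ∧ e t < n}.Finite := by
    intro n
    have : {t : T | t ∈ S ∧ e t < n} ⊆ e ⁻¹' (Set.Iio n) := fun t ht => ht.2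
    exact Set.Finite.subset ((Set.finite_Iio n).preimage he.injOn) this
  set A : ℕ → Finset T := fun n => (hfinn n).toFinset with hA
  have hmemA : ∀ n t, t ∈ A n ↔ t ∈ S ∧ e t < n := by
    intro n t
    simp [hA, Set.Finite.mem_toFinset]
  set c : ℕ → K := fun n => ∑ t ∈ A n, f t with hc
  have hmono : Monotone c := by
    intro n m hnm
    apply Finset.sum_le_sum_of_subset_of_nonneg
    · intro t ht
      rw [hmemA] at ht ⊢
      exact ⟨ht.1, lt_of_lt_of_le ht.2 hnm⟩
    · intros
      exact omega_zero_le _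
  have hmem : ∀ n, c n ∈ partialSums S f := by
    intro n
    exact ⟨A n, fun t ht => ((hmemA n t).1 ht).1, rfl⟩
  obtain ⟨s, hslub⟩ := OmegaCommSemiring.chain_lub c hmono
  have hub : IsLUB (partialSums S f) s := by
    constructor
    · rintro x ⟨F, hFS, rfl⟩
      refine le_trans ?_ (hslub.1 ⟨F.sup e + 1, rfl⟩)
      apply Finset.sum_le_sum_of_subset_of_nonneg
      · intro t ht
        rw [hmemA]
        exact ⟨hFS ht, Nat.lt_succ_of_le (Finset.le_sup ht)⟩
      · intros
        exact omega_zero_le _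
    · intro u hu
      exact hslub.2 (by rintro x ⟨n, rfl⟩; exact hu (hmem n))
  have hex : ∃ z, IsLUB (partialSums S f) z := ⟨s, hub⟩
  have hset : setSum S f = s := by
    rw [setSum, dif_pos hex]
    exact hex.choose_spec.unique hub
  exact ⟨c, hmono, hmem, hset ▸ hslub, hset ▸ hub⟩

lemma le_setSum {T : Type} [Countable T] (S : Set T) (f : T → K) {x : K}
    (hx : x ∈ partialSums S f) : x ≤ setSum S f := by
  obtain ⟨c, -, -, -, h4⟩ := exists_partialSums_chain S f
  exact h4.1 hx

lemma setSum_le_of_ub {T : Type} {S : Set T} {f : T → K} {B : K}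
    (hB : B ∈ upperBounds (partialSums S f)) : setSum S f ≤ B := by
  rw [setSum]
  split
  · next h => exact h.choose_spec.2 hB
  · exact omega_zero_le B

end Aux

section TreeAux

variable {P C K : Type} {prog : Set (Rule P C)} {D : Set (Fact P C)}

lemma map_eq_map_mem {α β : Type} {l : List α} {f g : α → β}
    (h : l.map f = l.map g) {x : α} (hx : x ∈ l) : f x = g x := by
  induction l with
  | nil => exact absurd hx List.not_mem_nil
  | cons a l ih =>
      simp only [List.map_cons, List.cons.injEq] at h
      rcases List.mem_cons.1 hx with rfl | hx
      · exact h.1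
      · exact ih h.2 hx

lemma head_subst_eq (r : Rule P C) {σ σ' : Fin r.nvars → C} (h : headAgree r σ σ') :
    r.head.subst σ' = r.head.subst σ := by
  unfold Atom.subst
  congr 1
  apply List.map_congr_left
  intro t ht
  cases t with
  | const c => rfl
  | var v => exact h v ht

/-- An injective encoding of derivation trees into `ℕ`, given injective (on the database and
the program) encodings of facts and rules. The substitution at an inner node is not recorded:
it is determined by the rule and the facts derived by the children, thanks to
`Rule.vars_in_body`. -/
def DTree.code (eF : Fact P C → ℕ) (eR : Rule P C → ℕ) :
    ∀ {a : Fact P C}, DTree prog D a → ℕ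
  | _, .leaf a _ => Nat.pair 0 (eF a)
  | _, .node r _ _ ch =>
      Nat.pair 1 (Nat.pair (eR r)
        (Encodable.encode (List.ofFn fun i => (ch i).code eF eR)))

lemma DTree.weight_cast [CommSemiring K] (lam : Fact P C → K) {a b : Fact P C}
    (h : a = b) (t : DTree prog D a) :
    DTree.weight lam (h ▸ t : DTree prog D b) = DTree.weight lam t := by
  subst h; rfl

lemma DTree.code_cast (eF : Fact P C → ℕ) (eR : Rule P C → ℕ) {a b : Fact P C}
    (h : a = b) (t : DTree prog D a) :
    DTree.code eF eR (h ▸ t : DTree prog D b) = DTree.code eF eR t := by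
  subst h; rfl

lemma DTree.code_inj (eF : Fact P C → ℕ) (eR : Rule P C → ℕ)
    (hF : Set.InjOn eF D) (hR : Set.InjOn eR prog) :
    ∀ {a : Fact P C} (t : DTree prog D a) {b : Fact P C} (t' : DTree prog D b),
      t.code eF eR = t'.code eF eR → a = b ∧ HEq t t' := by
  intro a t
  induction t with
  | leaf x hx =>
      intro b t' h
      cases t' with
      | leaf y hy =>
          simp only [DTree.code] at h
          obtain ⟨-, h2⟩ := Nat.pair_eq_pair.1 h
          obtain rfl : x = b := hF hx hy h2
          exact ⟨rfl, HEq.rfl⟩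
      | node r' hr' σ' ch' =>
          simp only [DTree.code] at h
          exact absurd (Nat.pair_eq_pair.1 h).1 (by simp)
  | node r hr σ ch ih =>
      intro b t' h
      cases t' with
      | leaf y hy =>
          simp only [DTree.code] at h
          exact absurd (Nat.pair_eq_pair.1 h).1 (by simp)
      | node r' hr' σ' ch' =>
          simp only [DTree.code] at h
          obtain ⟨-, h⟩ := Nat.pair_eq_pair.1 h
          obtain ⟨h1, h2⟩ := Nat.pair_eq_pair.1 h
          obtain rfl : r = r' := hR hr hr' h1
          have hlist := Encodable.encode_injective h2
          have hfun := List.ofFn_inj.1 hlist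
          have hchild : ∀ i, (r.body i).subst σ = (r.body i).subst σ' ∧
              HEq (ch i) (ch' i) :=
            fun i => ih i (ch' i) (congrFun hfun i)
          have hσ : σ = σ' := by
            funext v
            obtain ⟨i, hv⟩ := r.vars_in_body v
            have h3 := congrArg Atom.args (hchild i).1
            simp only [Atom.subst] at h3
            exact map_eq_map_mem h3 hv
          subst hσ
          have hch : ch = ch' := funext fun i => eq_of_heq (hchild i).2
          subst hch
          exact ⟨rfl, HEq.rfl⟩

lemma node_code_inj (eF : Fact P C → ℕ) (eR : Rule P C → ℕ)
    (hF : Set.InjOn eF D) (hR : Set.InjOn eR prog)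
    {r : Rule P C} (hr hr' : r ∈ prog) {σ₁ σ₂ : Fin r.nvars → C}
    {ch₁ : ∀ i, DTree prog D ((r.body i).subst σ₁)}
    {ch₂ : ∀ i, DTree prog D ((r.body i).subst σ₂)}
    (h : (DTree.node r hr σ₁ ch₁).code eF eR = (DTree.node r hr' σ₂ ch₂).code eF eR) :
    σ₁ = σ₂ ∧ HEq ch₁ ch₂ := by
  simp only [DTree.code] at h
  obtain ⟨-, h⟩ := Nat.pair_eq_pair.1 h
  obtain ⟨-, h2⟩ := Nat.pair_eq_pair.1 h
  have hlist := Encodable.encode_injective h2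
  have hfun := List.ofFn_inj.1 hlist
  have hchild : ∀ i, (r.body i).subst σ₁ = (r.body i).subst σ₂ ∧
      HEq (ch₁ i) (ch₂ i) :=
    fun i => DTree.code_inj eF eR hF hR (ch₁ i) (ch₂ i) (congrFun hfun i)
  have hσ : σ₁ = σ₂ := by
    funext v
    obtain ⟨i, hv⟩ := r.vars_in_body v
    have h3 := congrArg Atom.args (hchild i).1
    simp only [Atom.subst] at h3
    exact map_eq_map_mem h3 hv
  subst hσ
  exact ⟨rfl, heq_of_eq (funext fun i => eq_of_heq (hchild i).2)⟩

lemma exists_codes (hprog : prog.Finite) (hfin : D.Finite) :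
    ∃ (eF : Fact P C → ℕ) (eR : Rule P C → ℕ),
      Set.InjOn eF D ∧ Set.InjOn eR prog := by
  classical
  haveI := hfin.countable.to_subtype
  haveI := hprog.countable.to_subtype
  obtain ⟨f, hf⟩ := exists_injective_nat ↥D
  obtain ⟨g, hg⟩ := exists_injective_nat ↥prog
  refine ⟨fun x => if h : x ∈ D then f ⟨x, h⟩ else 0,
    fun r => if h : r ∈ prog then g ⟨r, h⟩ else 0, ?_, ?_⟩
  · intro x hx y hy hxy
    simp only [dif_pos hx, dif_pos hy] at hxy
    exact congrArg Subtype.val (hf hxy)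
  · intro x hx y hy hxy
    simp only [dif_pos hx, dif_pos hy] at hxy
    exact congrArg Subtype.val (hg hxy)

lemma dtree_countable (hprog : prog.Finite) (hfin : D.Finite) (a : Fact P C) :
    Countable (DTree prog D a) := by
  obtain ⟨eF, eR, hF, hR⟩ := exists_codes hprog hfin
  refine (countable_iff_exists_injective _).2 ⟨DTree.code eF eR, fun t t' h => ?_⟩
  exact eq_of_heq (DTree.code_inj eF eR hF hR t t' h).2

lemma entails_tree {a : Fact P C} (h : Entails prog D a) :
    Nonempty (DTree prog D a) := by
  refine h {b | Nonempty (DTree prog D b)} (fun b hb => ⟨.leaf b hb⟩) ?_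
  intro r hr σ hb
  exact ⟨.node r hr σ fun i => (hb i).some⟩

end TreeAux

/-- the interpretation of all entailed facts annotated by `AT` is an
annotated model. -/
theorem statement_14 (P C K : Type) [OmegaCommSemiring K]
    (prog : Set (Rule P C)) (hprog : prog.Finite)
    (db : AnnDB P C K) (hfin : db.facts.Finite)
    (hann : ∀ a ∈ db.facts, db.ann a ≠ 0) :
    IsAnnModel prog db { a | Entails prog db.facts a } (fun a => AT prog db a) := by
  classical
  have hc : ∀ b : Fact P C, Countable (DTree prog db.facts b) :=
    fun b => dtree_countable hprog hfin b
  obtain ⟨eF, eR, hF, hR⟩ := exists_codes hprog hfin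
  refine ⟨fun a ha I hDI _ => hDI ha, ?_, ?_⟩
  · -- the database annotation is below the `AT` annotation
    intro a ha
    haveI := hc a
    refine le_setSum Set.univ _ ⟨({DTree.leaf a ha} : Finset (DTree prog db.facts a)),
      fun t _ => Set.mem_univ t, ?_⟩
    rw [Finset.sum_singleton]
    rfl
  · intro r hr σ hbody
    have hhead : Entails prog db.facts (r.head.subst σ) :=
      fun I hDI hcl => hcl r hr σ fun i => hbody i I hDI hcl
    refine ⟨hhead, ?_⟩
    apply setSum_le_of_ub
    rintro x ⟨Fσ, hFσ, rfl⟩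
    -- chains converging to the `AT` values of the body facts
    have hchain : ∀ (σ' : Fin r.nvars → C) (i : Fin r.nbody),
        ∃ c : ℕ → K, Monotone c ∧
          (∀ n, c n ∈ partialSums Set.univ
            (fun t : DTree prog db.facts ((r.body i).subst σ') => t.weight db.ann)) ∧
          IsLUB (Set.range c) (AT prog db ((r.body i).subst σ')) := by
      intro σ' i
      haveI := hc ((r.body i).subst σ')
      obtain ⟨c, h1, h2, h3, -⟩ := exists_partialSums_chain Set.univ
        (fun t : DTree prog db.facts ((r.body i).subst σ') => t.weight db.ann)
      exact ⟨c, h1, h2, h3⟩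
    choose c hc1 hc2 hc3 using hchain
    have hlubS : IsLUB (Set.range fun n => ∑ σ' ∈ Fσ, ∏ i, c σ' i n)
        (∑ σ' ∈ Fσ, ∏ i, AT prog db ((r.body i).subst σ')) :=
      chain_sum_lub Fσ _ _
        (fun σ' => mono_finset_prod _ _ (fun i => hc1 σ' i))
        (fun σ' => chain_prod_lub Finset.univ _ _ (fun i => hc1 σ' i) (fun i => hc3 σ' i))
    refine hlubS.2 ?_
    rintro x ⟨n, rfl⟩
    -- finite sets of trees realizing the current chain values
    have hTf : ∀ (σ' : Fin r.nvars → C) (i : Fin r.nbody),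
        ∃ Tf : Finset (DTree prog db.facts ((r.body i).subst σ')),
          c σ' i n = ∑ t ∈ Tf, t.weight db.ann := by
      intro σ' i
      obtain ⟨F, -, hFeq⟩ := hc2 σ' i n
      exact ⟨F, hFeq⟩
    choose Tf hTf using hTf
    -- a default tree of the head fact
    obtain ⟨t₀⟩ := entails_tree hhead
    -- the map sending a substitution together with a tuple of trees of the bodies to a
    -- derivation tree of the head
    set g : ((σ' : Fin r.nvars → C) ×
          (∀ i ∈ (Finset.univ : Finset (Fin r.nbody)),
            DTree prog db.facts ((r.body i).subst σ'))) → DTree prog db.facts (r.head.subst σ) :=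
      fun x =>
        if h : Atom.subst x.1 r.head = r.head.subst σ then
          h ▸ DTree.node r hr x.1 (fun i => x.2 i (Finset.mem_univ i))
        else t₀ with hg
    set s : Finset ((σ' : Fin r.nvars → C) ×
        (∀ i ∈ (Finset.univ : Finset (Fin r.nbody)),
          DTree prog db.facts ((r.body i).subst σ'))) :=
      Fσ.sigma (fun σ' => (Finset.univ : Finset (Fin r.nbody)).pi (fun i => Tf σ' i)) with hs
    have hhagree : ∀ σ' ∈ Fσ, Atom.subst σ' r.head = r.head.subst σ := by
      intro σ' hσ'
      exact head_subst_eq r (hFσ hσ').2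
    -- rewrite the sum as a sum of weights over a set of trees of the head
    have heq1 : (∑ σ' ∈ Fσ, ∏ i, c σ' i n) = ∑ x ∈ s, (g x).weight db.ann := by
      rw [hs, Finset.sum_sigma]
      refine Finset.sum_congr rfl fun σ' hσ' => ?_
      have hstep : (∏ i, c σ' i n)
          = ∑ p ∈ (Finset.univ : Finset (Fin r.nbody)).pi (fun i => Tf σ' i),
              ∏ i ∈ Finset.univ.attach,
                DTree.weight db.ann (p i.1 i.2) := by
        rw [Finset.prod_congr rfl fun i _ => hTf σ' i]
        exact Finset.prod_sum _ _ _
      rw [hstep]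
      refine Finset.sum_congr rfl fun p hp => ?_
      have hgx : g ⟨σ', p⟩ = (hhagree σ' hσ') ▸
          DTree.node r hr σ' (fun i => p i (Finset.mem_univ i)) := by
        rw [hg]
        exact dif_pos (hhagree σ' hσ')
      rw [hgx, DTree.weight_cast]
      show ∏ i ∈ Finset.univ.attach, DTree.weight db.ann (p i.1 i.2)
        = DTree.weight db.ann (DTree.node r hr σ' (fun i => p i (Finset.mem_univ i)))
      have : (DTree.node r hr σ' (fun i => p i (Finset.mem_univ i))).weight db.ann
          = ∏ i : Fin r.nbody, DTree.weight db.ann (p i (Finset.mem_univ i)) := rfl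
      rw [this]
      exact Finset.prod_attach _ (fun i => DTree.weight db.ann (p i (Finset.mem_univ i)))
    -- injectivity of `g` on `s`
    have hinj : ∀ x ∈ s, ∀ y ∈ s, g x = g y → x = y := by
      intro x hx y hy hgxy
      obtain ⟨σ₁, p₁⟩ := x
      obtain ⟨σ₂, p₂⟩ := y
      have h₁ : Atom.subst σ₁ r.head = r.head.subst σ :=
        hhagree σ₁ (Finset.mem_sigma.1 hx).1
      have h₂ : Atom.subst σ₂ r.head = r.head.subst σ :=
        hhagree σ₂ (Finset.mem_sigma.1 hy).1
      have hcode : (DTree.node r hr σ₁ (fun i => p₁ i (Finset.mem_univ i))).code eF eR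
          = (DTree.node r hr σ₂ (fun i => p₂ i (Finset.mem_univ i))).code eF eR := by
        have := congrArg (DTree.code eF eR) hgxy
        rw [hg] at this
        simp only [dif_pos h₁, dif_pos h₂] at this
        rwa [DTree.code_cast, DTree.code_cast] at this
      obtain ⟨hσ, hch⟩ := node_code_inj eF eR hF hR hr hr hcode
      subst hσ
      have hp : p₁ = p₂ := by
        funext i hm
        have := congrFun (eq_of_heq hch) i
        exact this
      subst hp
      rfl
    show (∑ σ' ∈ Fσ, ∏ i, c σ' i n) ≤ AT prog db (r.head.subst σ)
    rw [heq1, ← Finset.sum_image hinj]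
    haveI := hc (r.head.subst σ)
    exact le_setSum Set.univ _ ⟨s.image g, fun t _ => Set.mem_univ t, rfl⟩

end Datalog
end

section
/- If β ∈ D is necessary to Σ,D ⊨ α (i.e., Σ, D∖{β} ⊭ α), then β labels a leaf of every derivation tree of α w.r.t. Σ and D. Consequently, each of the semantics AT, NRT, MDT, and HMDT satisfies the Necessary Facts Property: there exists e ∈ K such that P(Σ,D,K,λ,α) = (∏_{β∈Nec} λ(β)) × e, where Nec is the set of facts necessary to Σ,D ⊨ α. -/
attribute [local instance] Classical.propDecidable

namespace Datalog

variable {P C K : Type}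

/-! ### Auxiliary material for Statement 19 -/

section Aux19

variable {prog : Set (Rule P C)} {D : Set (Fact P C)}

lemma entails_of_mem {a : Fact P C} (ha : a ∈ D) : Entails prog D a := fun _ hD _ => hD ha

lemma closedUnder_entails : ClosedUnder prog { a : Fact P C | Entails prog D a } :=
  fun r hr σ hb I hD hc => hc r hr σ fun i => hb i I hD hc

namespace DTree

/-- The multiset of leaf labels of a derivation tree. -/
def leaves : ∀ {a : Fact P C}, DTree prog D a → Multiset (Fact P C)
  | _, .leaf a _ => {a}
  | _, .node r _ _ ch => ∑ i : Fin r.nbody, (ch i).leaves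

lemma root_entails : ∀ {a : Fact P C}, DTree prog D a → Entails prog D a
  | _, .leaf _ ha => entails_of_mem ha
  | _, .node r hr σ ch => fun I hD hc => hc r hr σ fun i => (ch i).root_entails I hD hc

lemma mem_leaves_iff_hasLeaf {x : Fact P C} :
    ∀ {a : Fact P C} (t : DTree prog D a), x ∈ t.leaves ↔ t.hasLeaf x
  | _, .leaf a _ => by simp [leaves, hasLeaf, eq_comm]
  | _, .node r hr σ ch => by
    simp only [leaves, hasLeaf, Multiset.mem_sum, Finset.mem_univ, true_and]
    exact exists_congr fun i => mem_leaves_iff_hasLeaf (ch i)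

lemma leaves_subset : ∀ {a : Fact P C} (t : DTree prog D a), ∀ x ∈ t.leaves, x ∈ D
  | _, .leaf a ha => fun x hx => by
      rw [leaves, Multiset.mem_singleton] at hx; exact hx ▸ ha
  | _, .node r hr σ ch => fun x hx => by
      rw [leaves, Multiset.mem_sum] at hx
      obtain ⟨i, -, hx⟩ := hx
      exact (ch i).leaves_subset x hx

lemma mem_of_leaves_closed :
    ∀ {a : Fact P C} (t : DTree prog D a) (I : Set (Fact P C)),
      (∀ x ∈ t.leaves, x ∈ I) → ClosedUnder prog I → a ∈ I
  | _, .leaf a _, I, hI, _ => hI a (Multiset.mem_singleton_self a)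
  | _, .node r hr σ ch, I, hI, hc =>
      hc r hr σ fun i => (ch i).mem_of_leaves_closed I
        (fun x hx => hI x (by rw [leaves, Multiset.mem_sum]; exact ⟨i, Finset.mem_univ i, hx⟩)) hc

/-- A necessary fact labels a leaf of every derivation tree. -/
lemma necessary_hasLeaf {β α : Fact P C} (hne : ¬ Entails prog (D \ {β}) α)
    (t : DTree prog D α) : t.hasLeaf β := by
  by_contra hnl
  apply hne
  intro I hDI hc
  refine t.mem_of_leaves_closed I (fun x hx => hDI ⟨t.leaves_subset x hx, ?_⟩) hc
  intro hxx
  rw [Set.mem_singleton_iff] at hxx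
  exact hnl ((mem_leaves_iff_hasLeaf t).1 (hxx ▸ hx))

lemma weight_eq_leaves_prod [CommSemiring K] (lam : Fact P C → K) :
    ∀ {a : Fact P C} (t : DTree prog D a), t.weight lam = (t.leaves.map lam).prod
  | _, .leaf a _ => by simp [weight, leaves]
  | _, .node r hr σ ch => by
    rw [weight, leaves]
    have : ∀ s : Finset (Fin r.nbody),
        (Multiset.map lam (∑ i ∈ s, (ch i).leaves)).prod
          = ∏ i ∈ s, (Multiset.map lam ((ch i).leaves)).prod := by
      intro s
      induction s using Finset.cons_induction with
      | empty => simp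
      | cons a s ha ih =>
        rw [Finset.sum_cons, Finset.prod_cons, Multiset.map_add, Multiset.prod_add, ih]
    rw [this]
    exact Finset.prod_congr rfl fun i _ => weight_eq_leaves_prod lam (ch i)

end DTree

/-- The constants occurring in the database or in heads of rules of the program. -/
def consts (prog : Set (Rule P C)) (D : Set (Fact P C)) : Set C :=
  dbConsts D ∪ { c | ∃ r ∈ prog, Term.const c ∈ r.head.args }

lemma consts_finite (hprog : prog.Finite) (hD : D.Finite) : (consts prog D).Finite := by
  apply Set.Finite.union
  · have : dbConsts D = ⋃ a ∈ D, { c | c ∈ a.args } := by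
      ext c; simp [dbConsts]
    rw [this]
    exact Set.Finite.biUnion hD fun a _ => a.args.finite_toSet
  · have : { c | ∃ r ∈ prog, Term.const c ∈ r.head.args }
        = ⋃ r ∈ prog, { c | Term.const c ∈ r.head.args } := by
      ext c; simp
    rw [this]
    refine Set.Finite.biUnion hprog fun r _ => ?_
    have : { c | Term.const c ∈ r.head.args }
        = (Term.const : C → Term C (Fin r.nvars)) ⁻¹' { t | t ∈ r.head.args } := rfl
    rw [this]
    exact Set.Finite.preimage
      (Set.injOn_of_injective fun a b h => by injection h) r.head.args.finite_toSet

lemma entails_consts {α : Fact P C} (h : Entails prog D α) :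
    ∀ c ∈ α.args, c ∈ consts prog D := by
  refine (h { a | Entails prog D a ∧ ∀ c ∈ a.args, c ∈ consts prog D }
    (fun a ha => ⟨entails_of_mem ha, fun c hc => Or.inl ⟨a, ha, hc⟩⟩) ?_).2
  intro r hr σ hb
  refine ⟨closedUnder_entails r hr σ fun i => (hb i).1, ?_⟩
  intro c hc
  rcases List.mem_map.1 hc with ⟨t, ht, rfl⟩
  cases t with
  | const c' => exact Or.inr ⟨r, hr, ht⟩
  | var v =>
    obtain ⟨i, hi⟩ := r.vars_in_body v
    exact (hb i).2 _ (List.mem_map.2 ⟨Term.var v, hi, rfl⟩)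

lemma node_sigma_mem {r : Rule P C} (hr : r ∈ prog) (σ : Fin r.nvars → C)
    (ch : ∀ i : Fin r.nbody, DTree prog D ((r.body i).subst σ)) :
    ∀ v, σ v ∈ consts prog D := by
  intro v
  obtain ⟨i, hi⟩ := r.vars_in_body v
  exact entails_consts (ch i).root_entails _ (List.mem_map.2 ⟨Term.var v, hi, rfl⟩)

/-- There are only finitely many derivation trees of a given depth bound. -/
lemma finite_trees_of_depth_le (hprog : prog.Finite) (hD : D.Finite) (n : ℕ) :
    ∀ a : Fact P C, Finite { t : DTree prog D a // t.depth ≤ n } := by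
  haveI := hprog.to_subtype
  haveI := (consts_finite hprog hD).to_subtype
  induction n with
  | zero =>
    intro a
    have : Subsingleton { t : DTree prog D a // t.depth ≤ 0 } := by
      constructor
      rintro ⟨t, ht⟩ ⟨t', ht'⟩
      cases t with
      | leaf a ha =>
        cases t' with
        | leaf _ ha' => rfl
        | node r hr σ ch => simp [DTree.depth] at ht'
      | node r hr σ ch => simp [DTree.depth] at ht
    exact Finite.of_subsingleton
  | succ n ih =>
    intro a
    haveI : ∀ b, Finite { t : DTree prog D b // t.depth ≤ n } := ih
    haveI : ∀ r : ↥prog, Finite { σ : Fin (r : Rule P C).nvars → C // ∀ v, σ v ∈ consts prog D } :=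
      fun r => Finite.of_injective
        (fun σ => (fun v => (⟨σ.1 v, σ.2 v⟩ : ↥(consts prog D))))
        (fun σ σ' h => Subtype.ext (funext fun v => congrArg Subtype.val (congrFun h v)))
    let T := PLift (a ∈ D) ⊕
      Σ (r : ↥prog) (σ : { σ : Fin (r : Rule P C).nvars → C // ∀ v, σ v ∈ consts prog D }),
        PLift ((r : Rule P C).head.subst σ.1 = a) ×
          ∀ i : Fin (r : Rule P C).nbody,
            { t : DTree prog D (((r : Rule P C).body i).subst σ.1) // t.depth ≤ n }
    haveI : Finite T := by infer_instance
    let f : T → { t : DTree prog D a // t.depth ≤ n + 1 } := fun x =>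
      match x with
      | .inl h => ⟨.leaf a h.down, Nat.zero_le _⟩
      | .inr ⟨r, σ, he, ch⟩ =>
          he.down ▸ (⟨.node r.1 r.2 σ.1 (fun i => (ch i).1),
            Nat.succ_le_succ (Finset.sup_le fun i _ => (ch i).2)⟩ :
              { t : DTree prog D ((r : Rule P C).head.subst σ.1) // t.depth ≤ n + 1 })
    apply Finite.of_surjective f
    rintro ⟨t, ht⟩
    cases t with
    | leaf a ha => exact ⟨.inl ⟨ha⟩, rfl⟩
    | node r hr σ ch =>
      have hσ : ∀ v, σ v ∈ consts prog D := node_sigma_mem hr σ ch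
      have hsup : (Finset.univ.sup fun i => (ch i).depth) ≤ n := Nat.succ_le_succ_iff.1 ht
      exact ⟨.inr ⟨⟨r, hr⟩, ⟨σ, hσ⟩, ⟨rfl⟩,
        fun i => ⟨ch i,
          le_trans (Finset.le_sup (f := fun i => (ch i).depth) (Finset.mem_univ i)) hsup⟩⟩, rfl⟩

/-- Factorization of the weight of a tree through the product over a set of facts that label
leaves of every tree. -/
lemma weight_factor [CommSemiring K] (lam : Fact P C → K) (s₀ : Finset (Fact P C))
    {α : Fact P C} (hnec : ∀ β ∈ s₀, ∀ t : DTree prog D α, t.hasLeaf β)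
    (t : DTree prog D α) :
    t.weight lam = (∏ β ∈ s₀, lam β) * ((t.leaves - s₀.val).map lam).prod := by
  have hle : s₀.val ≤ t.leaves := by
    rw [Multiset.le_iff_count]
    intro x
    by_cases hx : x ∈ s₀
    · rw [Multiset.count_eq_one_of_mem s₀.nodup hx]
      exact Multiset.one_le_count_iff_mem.2
        ((DTree.mem_leaves_iff_hasLeaf t).2 (hnec x hx t))
    · rw [Multiset.count_eq_zero_of_notMem hx]
      exact Nat.zero_le _
  rw [DTree.weight_eq_leaves_prod, Finset.prod_eq_multiset_prod, mul_comm]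
  conv_lhs => rw [← tsub_add_cancel_of_le hle]
  rw [Multiset.map_add, Multiset.prod_add]

/-- Pulling a common factor out of a conditional `finsum`. -/
lemma finsum_cond_factor {T : Type} [CommSemiring K] (p : T → Prop) (w g : T → K) (c : K)
    (hw : ∀ t, p t → w t = c * g t) :
    ∃ e, (∑ᶠ (t : T) (_ : p t), w t) = c * e := by
  have hf : (fun t => ∑ᶠ _ : p t, w t) = fun t => if p t then w t else 0 :=
    funext fun t => finsum_eq_if
  show ∃ e, (∑ᶠ t : T, ∑ᶠ _ : p t, w t) = c * e
  rw [hf]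
  by_cases hfin : (Function.support fun t => if p t then w t else 0).Finite
  · refine ⟨∑ t ∈ hfin.toFinset, if p t then g t else 0, ?_⟩
    rw [finsum_eq_sum _ hfin, Finset.mul_sum]
    refine Finset.sum_congr rfl fun t _ => ?_
    split_ifs with h
    · exact hw t h
    · exact (mul_zero c).symm
  · exact ⟨0, by rw [finsum_of_infinite_support hfin, mul_zero]⟩

end Aux19

/-- a necessary fact labels a leaf of every derivation tree; consequently
`AT`, `NRT`, `MDT` and `HMDT` satisfy the Necessary Facts Property. -/
theorem statement_19 (P C : Type) (prog : Set (Rule P C)) (hprog : prog.Finite)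
    (α : Fact P C) :
    (∀ D : Set (Fact P C), D.Finite → ∀ β ∈ D, ¬ Entails prog (D \ {β}) α →
        ∀ t : DTree prog D α, t.hasLeaf β)
      ∧ (∀ (K : Type) [inst : OmegaCommSemiring K], ∀ db : AnnDB P C K, db.facts.Finite →
          (∀ a ∈ db.facts, db.ann a ≠ 0) →
          ∃ e : K, AT prog db α =
            (∏ᶠ β ∈ {β ∈ db.facts | ¬ Entails prog (db.facts \ {β}) α}, db.ann β) * e)
      ∧ (∀ (K : Type) [inst : CommSemiring K], ∀ db : AnnDB P C K, db.facts.Finite →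
          (∀ a ∈ db.facts, db.ann a ≠ 0) →
          (∃ e : K, NRT prog db α =
            (∏ᶠ β ∈ {β ∈ db.facts | ¬ Entails prog (db.facts \ {β}) α}, db.ann β) * e)
          ∧ (∃ e : K, MDT prog db α =
            (∏ᶠ β ∈ {β ∈ db.facts | ¬ Entails prog (db.facts \ {β}) α}, db.ann β) * e)
          ∧ (∃ e : K, HMDT prog db α =
            (∏ᶠ β ∈ {β ∈ db.facts | ¬ Entails prog (db.facts \ {β}) α}, db.ann β) * e)) := by
  refine ⟨fun D _ β _ hne t => DTree.necessary_hasLeaf hne t, ?_, ?_⟩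
  · -- AT
    intro K _ db hdb _
    have hS : {β ∈ db.facts | ¬ Entails prog (db.facts \ {β}) α}.Finite :=
      hdb.subset (Set.sep_subset _ _)
    have hc : (∏ᶠ β ∈ {β ∈ db.facts | ¬ Entails prog (db.facts \ {β}) α}, db.ann β)
        = ∏ β ∈ hS.toFinset, db.ann β :=
      finprod_mem_eq_finite_toFinset_prod _ hS
    set c := ∏ β ∈ hS.toFinset, db.ann β with hcdef
    have hnec : ∀ β ∈ hS.toFinset, ∀ t : DTree prog db.facts α, t.hasLeaf β := fun β hβ t =>
      DTree.necessary_hasLeaf (hS.mem_toFinset.1 hβ).2 t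
    set g : DTree prog db.facts α → K :=
      fun t => ((t.leaves - hS.toFinset.val).map db.ann).prod with hgdef
    have hw : ∀ t : DTree prog db.facts α, t.weight db.ann = c * g t :=
      fun t => weight_factor db.ann hS.toFinset hnec t
    rw [hc]
    unfold AT setSum
    by_cases h : ∃ s, IsLUB (partialSums Set.univ fun t : DTree prog db.facts α =>
        t.weight db.ann) s
    · have hfin : ∀ n : ℕ, {t : DTree prog db.facts α | t.depth ≤ n}.Finite := fun n =>
        Set.finite_coe_iff.1 (finite_trees_of_depth_le hprog hdb n α)
      set F : ℕ → Finset (DTree prog db.facts α) := fun n => (hfin n).toFinset with hFdef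
      set b : ℕ → K := fun n => ∑ t ∈ F n, g t with hbdef
      have hsum_le : ∀ (G G' : Finset (DTree prog db.facts α)) (f : DTree prog db.facts α → K),
          G ⊆ G' → ∑ t ∈ G, f t ≤ ∑ t ∈ G', f t := fun G G' f hsub =>
        (OmegaCommSemiring.le_iff_exists_add _ _).2
          ⟨∑ t ∈ G' \ G, f t, by rw [add_comm, Finset.sum_sdiff hsub]⟩
      have hF : ∀ {m n : ℕ}, m ≤ n → F m ⊆ F n := by
        intro m n hmn t ht
        simp only [hFdef, Set.Finite.mem_toFinset, Set.mem_setOf_eq] at ht ⊢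
        exact ht.trans hmn
      have hb : Monotone b := fun m n hmn => hsum_le _ _ _ (hF hmn)
      obtain ⟨e, he⟩ := OmegaCommSemiring.chain_lub b hb
      have hce := OmegaCommSemiring.mul_lub b c e hb he
      have hcb : ∀ n, c * b n = ∑ t ∈ F n, t.weight db.ann := fun n => by
        rw [hbdef, Finset.mul_sum]
        exact Finset.sum_congr rfl fun t _ => (hw t).symm
      refine ⟨e, ?_⟩
      rw [dif_pos h]
      refine h.choose_spec.unique ⟨?_, ?_⟩
      · rintro x ⟨G, -, rfl⟩
        have hGF : G ⊆ F (G.sup DTree.depth) := fun t ht =>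
          (hfin _).mem_toFinset.2 (Finset.le_sup (f := DTree.depth) ht)
        calc (∑ t ∈ G, t.weight db.ann)
            ≤ ∑ t ∈ F (G.sup DTree.depth), t.weight db.ann := hsum_le _ _ _ hGF
          _ = c * b (G.sup DTree.depth) := (hcb _).symm
          _ ≤ c * e := hce.1 ⟨_, rfl⟩
      · intro y hy
        refine hce.2 ?_
        rintro x ⟨n, rfl⟩
        show c * b n ≤ y
        rw [hcb n]
        exact hy ⟨F n, Set.subset_univ _, rfl⟩
    · exact ⟨0, by rw [dif_neg h, mul_zero]⟩
  · -- NRT, MDT, HMDT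
    intro K _ db hdb _
    have hS : {β ∈ db.facts | ¬ Entails prog (db.facts \ {β}) α}.Finite :=
      hdb.subset (Set.sep_subset _ _)
    have hc : (∏ᶠ β ∈ {β ∈ db.facts | ¬ Entails prog (db.facts \ {β}) α}, db.ann β)
        = ∏ β ∈ hS.toFinset, db.ann β :=
      finprod_mem_eq_finite_toFinset_prod _ hS
    set c := ∏ β ∈ hS.toFinset, db.ann β with hcdef
    have hnec : ∀ β ∈ hS.toFinset, ∀ t : DTree prog db.facts α, t.hasLeaf β := fun β hβ t =>
      DTree.necessary_hasLeaf (hS.mem_toFinset.1 hβ).2 t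
    have hw : ∀ t : DTree prog db.facts α,
        t.weight db.ann = c * ((t.leaves - hS.toFinset.val).map db.ann).prod :=
      fun t => weight_factor db.ann hS.toFinset hnec t
    have key : ∀ p : DTree prog db.facts α → Prop,
        ∃ e : K, (∑ᶠ (t : DTree prog db.facts α) (_ : p t), t.weight db.ann) = c * e :=
      fun p => finsum_cond_factor p _ _ c (fun t _ => hw t)
    obtain ⟨e₁, he₁⟩ := key fun t => t.nonRecursive
    obtain ⟨e₂, he₂⟩ := key fun t => t.minimalDepth
    obtain ⟨e₃, he₃⟩ := key fun t => t.hereditaryMinimal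
    exact ⟨⟨e₁, by rw [hc]; exact he₁⟩, ⟨e₂, by rw [hc]; exact he₂⟩,
      ⟨e₃, by rw [hc]; exact he₃⟩⟩

end Datalog
end
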